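/- Consider the max-computing CRN with reactions (1) X₁ → Y + A₁, (2) X₂ → Y + A₂, (3) A₁ + A₂ → M, (4) Y + M → ∅ (annihilation with no products). From the initial state with concentrations x₁ of X₁, x₂ of X₂ and all other species zero, there is a line-segment reachable static state in which the concentration of Y equals max(x₁, x₂). -/

import Mathlib

/-- A chemical reaction network: reactant and product stoichiometries per reaction. -/
structure CRN (S R : Type) where
  reactants : R → S → ℕ
  products : R → S → ℕ

namespace CRN

variable {S R : Type} [Fintype S] [Fintype R]

/-- Net change of species `s` by one unit of reaction `r`. -/
def net (C : CRN S R) (r : R) (s : S) : ℝ :=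
  (C.products r s : ℝ) - (C.reactants r s : ℝ)

/-- A flux vector `u` is applicable at state `a` if it is nonnegative and every
reaction with positive flux has all its reactants positive in `a`. -/
def Applicable (C : CRN S R) (u : R → ℝ) (a : S → ℝ) : Prop :=
  (∀ r, 0 ≤ u r) ∧ ∀ r, 0 < u r → ∀ s, 0 < C.reactants r s → 0 < a s

/-- Straight-line reachability via a given flux vector: `b = M u + a`,
with `u` applicable at `a` and `b` a valid (nonnegative) state. -/
def StepWith (C : CRN S R) (u : R → ℝ) (a b : S → ℝ) : Prop :=
  C.Applicable u a ∧ (∀ s, 0 ≤ b s) ∧ ∀ s, b s = a s + ∑ r, u r * C.net r s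

/-- Straight-line reachability. -/
def Step (C : CRN S R) (a b : S → ℝ) : Prop := ∃ u, C.StepWith u a b

/-- Line-segment reachability: reflexive transitive closure of straight-line steps. -/
def Reach (C : CRN S R) : (S → ℝ) → (S → ℝ) → Prop := Relation.ReflTransGen C.Step

/-- A state is static if only the zero flux vector is applicable at it. -/
def Static (C : CRN S R) (b : S → ℝ) : Prop :=
  ∀ u, C.Applicable u b → u = 0

/-- Non-competitive: every species strictly decreased by some reaction is a
reactant in only that reaction. -/
def NonCompetitive (C : CRN S R) : Prop :=
  ∀ r s, C.products r s < C.reactants r s → ∀ r', 0 < C.reactants r' s → r' = r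

/-- A finite line-segment path of length `n`. -/
structure FinPath (C : CRN S R) (n : ℕ) where
  states : Fin (n+1) → S → ℝ
  flux : Fin n → R → ℝ
  valid : ∀ i : Fin n, C.StepWith (flux i) (states i.castSucc) (states i.succ)

end CRN


@[simp] lemma Matrix.cons_val_five {α : Type*} {m : ℕ} (x : α) (u : Fin (m+5) → α) :
    Matrix.vecCons x u 5 = Matrix.vecHead (Matrix.vecTail (Matrix.vecTail
      (Matrix.vecTail (Matrix.vecTail u)))) := rfl

/-- The max-computing CRN: species `X₁, X₂, Y, A₁, A₂, M` (indices 0..5),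
reactions `X₁ → Y + A₁`, `X₂ → Y + A₂`, `A₁ + A₂ → M`, `Y + M → ∅`.
From `(x₁, x₂, 0, 0, 0, 0)` there is a line-segment reachable static state
whose `Y`-concentration equals `max x₁ x₂`. -/
theorem stmt2 (x1 x2 : ℝ) (h1 : 0 ≤ x1) (h2 : 0 ≤ x2) :
    let C : CRN (Fin 6) (Fin 4) :=
      ⟨![![1, 0, 0, 0, 0, 0], ![0, 1, 0, 0, 0, 0],
         ![0, 0, 0, 1, 1, 0], ![0, 0, 1, 0, 0, 1]],
        ![![0, 0, 1, 1, 0, 0], ![0, 0, 1, 0, 1, 0],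
          ![0, 0, 0, 0, 0, 1], ![0, 0, 0, 0, 0, 0]]⟩
    let a : Fin 6 → ℝ := ![x1, x2, 0, 0, 0, 0]
    ∃ b, C.Reach a b ∧ C.Static b ∧ b 2 = max x1 x2 := by
  
  intro C a
  set m : ℝ := min x1 x2 with hm
  have hm1 : m ≤ x1 := min_le_left _ _
  have hm2 : m ≤ x2 := min_le_right _ _
  have hm0 : 0 ≤ m := le_min h1 h2
  refine ⟨![0, 0, x1 + x2 - m, x1 - m, x2 - m, 0], ?_, ?_, ?_⟩
  · -- Reach
    have s1 : C.Step a ![0, 0, x1 + x2, x1, x2, 0] := by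
      refine ⟨![x1, x2, 0, 0], ⟨?_, ?_⟩, ?_, ?_⟩
      · intro r; fin_cases r <;> simp [h1, h2]
      · intro r hr s hs
        fin_cases r <;> fin_cases s <;> simp_all [a, C, Matrix.vecHead, Matrix.vecTail]
      · intro s; fin_cases s <;> simp <;> linarith
      · intro s; fin_cases s <;>
          simp [CRN.net, Fin.sum_univ_four, a, C, Matrix.vecHead, Matrix.vecTail] <;> ring
    have s2 : C.Step ![0, 0, x1 + x2, x1, x2, 0] ![0, 0, x1 + x2, x1 - m, x2 - m, m] := by
      refine ⟨![0, 0, m, 0], ⟨?_, ?_⟩, ?_, ?_⟩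
      · intro r; fin_cases r <;> simp [hm0]
      · intro r hr s hs
        fin_cases r <;> fin_cases s <;> simp_all [C, Matrix.vecHead, Matrix.vecTail] <;> linarith
      · intro s; fin_cases s <;> simp <;> linarith
      · intro s; fin_cases s <;>
          simp [CRN.net, Fin.sum_univ_four, C, Matrix.vecHead, Matrix.vecTail] <;> ring
    have s3 : C.Step ![0, 0, x1 + x2, x1 - m, x2 - m, m]
        ![0, 0, x1 + x2 - m, x1 - m, x2 - m, 0] := by
      refine ⟨![0, 0, 0, m], ⟨?_, ?_⟩, ?_, ?_⟩
      · intro r; fin_cases r <;> simp [hm0]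
      · intro r hr s hs
        fin_cases r <;> fin_cases s <;> simp_all [C, Matrix.vecHead, Matrix.vecTail] <;> linarith
      · intro s; fin_cases s <;> simp <;> linarith
      · intro s; fin_cases s <;>
          simp [CRN.net, Fin.sum_univ_four, C, Matrix.vecHead, Matrix.vecTail] <;> ring
    exact Relation.ReflTransGen.head s1 (Relation.ReflTransGen.head s2
      (Relation.ReflTransGen.single s3))
  · -- Static
    intro u ⟨hnn, happ⟩
    funext r
    by_contra hne
    have hr : 0 < u r := lt_of_le_of_ne (hnn r) (by simpa [eq_comm] using hne)
    fin_cases r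
    · have := happ 0 hr 0 (by norm_num [C]); simp at this
    · have := happ 1 hr 1 (by norm_num [C]); simp at this
    · have h3 := happ 2 hr 3 (by show (0:ℕ) < 1; norm_num)
      have h4 := happ 2 hr 4 (by show (0:ℕ) < 1; norm_num)
      simp at h3 h4
      rcases min_cases x1 x2 with ⟨he, _⟩ | ⟨he, _⟩ <;> rw [← hm] at he <;> linarith
    · have := happ 3 hr 5 (by show (0:ℕ) < 1; norm_num); simp at this
  · -- Y value
    simp only [Matrix.cons_val_two, Matrix.tail_cons, Matrix.head_cons]
    rcases le_total x1 x2 with h | h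
    · rw [hm, min_eq_left h, max_eq_right h]; ring
    · rw [hm, min_eq_right h, max_eq_left h]; ring
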